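/- All connected components of the separated directed quiver Q̄ of a finite connected quiver Q are isomorphic as quivers. More precisely, for any arrow i₀ → j₀ in Q, the map (i,n) ↦ (i, n−1) induces an isomorphism from the connected component of (i₀,0) onto the connected component of (j₀,0). -/

import Mathlib

/-- One (directed) step in the separated directed quiver `Q̄`. -/
def SepStep {V E : Type} (s t : E → V) (x y : V × ℤ) : Prop :=
  ∃ e : E, x.1 = s e ∧ y.1 = t e ∧ y.2 = x.2 + 1

/-- Connectedness in the underlying undirected graph of the separated directed quiver. -/
def SepConnected {V E : Type} (s t : E → V) : V × ℤ → V × ℤ → Prop :=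
  Relation.ReflTransGen (fun x y => SepStep s t x y ∨ SepStep s t y x)

/-- Connectedness in the underlying undirected graph of `Q`. -/
def QConnected {V E : Type} (s t : E → V) : V → V → Prop :=
  Relation.ReflTransGen (fun a b => (∃ e, s e = a ∧ t e = b) ∨ (∃ e, s e = b ∧ t e = a))

lemma sepStep_shift {V E : Type} (s t : E → V) (k : ℤ) {x y : V × ℤ}
    (h : SepStep s t x y) : SepStep s t (x.1, x.2 + k) (y.1, y.2 + k) := by
  obtain ⟨e, h1, h2, h3⟩ := h
  exact ⟨e, h1, h2, by dsimp; omega⟩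

lemma sepConn_shift {V E : Type} (s t : E → V) (k : ℤ) {a b : V × ℤ}
    (h : SepConnected s t a b) : SepConnected s t (a.1, a.2 + k) (b.1, b.2 + k) := by
  induction h with
  | refl => exact Relation.ReflTransGen.refl
  | tail _ hstep ih =>
      exact ih.tail (hstep.imp (sepStep_shift s t k) (sepStep_shift s t k))

/-- For any arrow `i₀ → j₀` of a finite connected quiver `Q`, the shift
`(i,n) ↦ (i,n−1)` is a bijection of `Q̄` preserving arrows which maps the connected
component of `(i₀,0)` onto the connected component of `(j₀,0)`; hence all connected
components of `Q̄` are isomorphic. -/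
theorem stmt3 {V E : Type} [Fintype V] [Fintype E] (s t : E → V)
    (hconn : ∀ u v : V, QConnected s t u v)
    (e₀ : E) (i₀ j₀ : V) (hs : s e₀ = i₀) (ht : t e₀ = j₀) :
    Function.Bijective (fun x : V × ℤ => (x.1, x.2 - 1)) ∧
    (∀ x y : V × ℤ, SepStep s t x y ↔ SepStep s t (x.1, x.2 - 1) (y.1, y.2 - 1)) ∧
    (∀ x : V × ℤ, SepConnected s t (i₀, 0) x ↔
      SepConnected s t (j₀, 0) (x.1, x.2 - 1)) := by
  have hsymm : ∀ {a b : V × ℤ}, SepConnected s t a b → SepConnected s t b a :=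
    fun h => (@Relation.ReflTransGen.stdSymm _ _ ⟨fun _ _ h => h.symm⟩).symm _ _ h
  have hij : SepConnected s t (i₀, 0) (j₀, 1) :=
    Relation.ReflTransGen.single (Or.inl ⟨e₀, hs.symm, ht.symm, rfl⟩)
  refine ⟨⟨fun a b h => ?_, fun y => ⟨(y.1, y.2 + 1), by simp⟩⟩, fun x y => ?_, fun x => ?_⟩
  · simp only [Prod.mk.injEq] at h
    exact Prod.ext h.1 (by omega)
  · constructor
    · intro h
      exact sepStep_shift s t (-1) h
    · rintro ⟨e, h1, h2, h3⟩
      exact ⟨e, h1, h2, by dsimp at h3 ⊢; omega⟩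
  · constructor
    · intro h
      have := sepConn_shift s t (-1) ((hsymm hij).trans h)
      simpa [← sub_eq_add_neg] using this
    · intro h
      have := sepConn_shift s t 1 h
      simp only [sub_add_cancel] at this
      exact hij.trans (by simpa [SepConnected] using this)
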